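/- Let α = [0;1+d₁,\overline{d₂,…,dₙ}] be a Sturm number of type (i) (dₙ ≥ d₁ ≥ 1) and let σ be its associated standard morphism. Then c_{1−α} = lim_{m→∞} (EσE)^m(b) = σ̂^ω(b), where σ̂ = EσE; that is, the characteristic Sturmian word of slope 1−α is generated by the standard morphism EσE from the letter b. -/
import Mathlib


/-- The two-letter alphabet 𝒜 = {a, b}. -/
inductive AB : Type
  | a : AB
  | b : AB
deriving DecidableEq, Repr

/-- Apply a morphism (determined by its images on the letters) to a finite word. -/
def applyM (g : AB → List AB) (w : List AB) : List AB := w.flatMap g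

/-- The exchange morphism E : a ↦ b, b ↦ a. -/
def Em : AB → List AB
  | AB.a => [AB.b]
  | AB.b => [AB.a]

/-- The morphism φ : a ↦ ab, b ↦ a. -/
def phim : AB → List AB
  | AB.a => [AB.a, AB.b]
  | AB.b => [AB.a]

/-- Composition of morphisms: `compM g h` applies `h` first, then `g`. -/
def compM (g h : AB → List AB) : AB → List AB := fun c => applyM g (h c)

/-- Powers of a morphism. -/
def mpow (g : AB → List AB) : ℕ → AB → List AB
  | 0 => fun c => [c]
  | n + 1 => compM g (mpow g n)

/-- A morphism is standard iff it is a composition of E and φ (in any number and order). -/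
inductive IsStandard : (AB → List AB) → Prop
  | id : IsStandard (fun c => [c])
  | compE {ψ : AB → List AB} : IsStandard ψ → IsStandard (compM ψ Em)
  | compPhi {ψ : AB → List AB} : IsStandard ψ → IsStandard (compM ψ phim)

/-- `IsRightConj ψ ξ k` : ξ is the k-th right conjugate of ψ, i.e. there is a word u
of length k with ψ(w)u = uξ(w) for all finite words w. -/
def IsRightConj (ψ ξ : AB → List AB) (k : ℕ) : Prop :=
  ∃ u : List AB, u.length = k ∧ ∀ w : List AB, applyM ψ w ++ u = u ++ applyM ξ w

/-- w^k (power of a finite word under concatenation). -/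
def lpow (w : List AB) : ℕ → List AB
  | 0 => []
  | k + 1 => w ++ lpow w k

/-- Standard sequence associated with a directive sequence (d₁, d₂, …) (here `d`
is indexed so that `d i` is dᵢ for i ≥ 1): `sseq d 0 = s₋₁ = b`, `sseq d (n+1) = sₙ`,
with s₀ = a and sₙ = sₙ₋₁^{dₙ} sₙ₋₂. -/
def sseq (d : ℕ → ℕ) : ℕ → List AB
  | 0 => [AB.b]
  | 1 => [AB.a]
  | n + 2 => lpow (sseq d (n + 1)) (d (n + 1)) ++ sseq d n

/-- Convergent denominators: `qseq d n` = qₙ = |sₙ| (q₀ = 1, q₁ = 1 + d₁,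
qₙ = dₙqₙ₋₁ + qₙ₋₂). -/
def qseq (d : ℕ → ℕ) : ℕ → ℕ
  | 0 => 1
  | 1 => 1 + d 1
  | n + 2 => d (n + 2) * qseq d (n + 1) + qseq d n

/-- `PrefInf u x` : the finite word u is a prefix of the infinite word x. -/
def PrefInf (u : List AB) (x : ℕ → AB) : Prop :=
  ∀ i, i < u.length → u.getD i AB.a = x i

/-- Image of an infinite word under a (non-erasing) morphism, letter by letter. -/
def applyInf (g : AB → List AB) (x : ℕ → AB) : ℕ → AB :=
  fun i => (applyM g ((List.range (i + 1)).map x)).getD i AB.a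

/-- `IsProdInf u x` : the infinite word x is the infinite product u 0 · u 1 · u 2 ⋯,
i.e. every finite partial product is a prefix of x. -/
def IsProdInf (u : ℕ → List AB) (x : ℕ → AB) : Prop :=
  ∀ n, PrefInf (((List.range n).map u).flatten) x

/-- Adjoining singular words: `vword d k` is the adjoining singular word v_{k-1}
(so `vword d 0 = v₋₁`), where vₙ = a·sₙ₊₁^{d_{n+2}−1}sₙ·b⁻¹ for n odd and
vₙ = b·sₙ₊₁^{d_{n+2}−1}sₙ·a⁻¹ for n even. -/
def vword (d : ℕ → ℕ) (k : ℕ) : List AB :=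
  (if k % 2 = 0 then AB.a else AB.b) ::
    (lpow (sseq d (k + 1)) (d (k + 1) - 1) ++ sseq d k).dropLast

/-- Singular words: `wword d k` is the singular word w_{k-2}
(w₋₂ = ε, w₋₁ = a, w₀ = b, and wₙ = a·sₙ·b⁻¹ for n ≥ 1 odd, wₙ = b·sₙ·a⁻¹ for n even). -/
def wword (d : ℕ → ℕ) : ℕ → List AB
  | 0 => []
  | 1 => [AB.a]
  | 2 => [AB.b]
  | k + 3 =>
      (if (k + 1) % 2 = 1 then AB.a else AB.b) :: (sseq d (k + 2)).dropLast

/-- The standard morphism σ associated with a type (i) Sturm number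
α = [0;1+d₁,\overline{d₂,…,dₙ}] : σ(a) = sₙ₋₁, σ(b) = sₙ₋₁^{dₙ−d₁} sₙ₋₂. -/
def sigmaGen (d : ℕ → ℕ) (n : ℕ) : AB → List AB
  | AB.a => sseq d n
  | AB.b => lpow (sseq d n) (d n - d 1) ++ sseq d (n - 1)

/-- The directive sequence of α = [0;2,\overline{r}] : d₁ = 1, dᵢ = r for i ≥ 2. -/
def dseq (r : ℕ) : ℕ → ℕ := fun i => if i ≤ 1 then 1 else r

/-- The directive sequence of 1 − α = [0;1,d₁,\overline{d₂,…,dₙ}] obtained from that of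
α = [0;1+d₁,\overline{d₂,…,dₙ}] : ê₁ = 0 and êᵢ = dᵢ₋₁ for i ≥ 2. -/
def dhat (d : ℕ → ℕ) : ℕ → ℕ := fun i => if i ≤ 1 then 0 else d (i - 1)

/-- `Generates ψ c x` : ψ is prolongable on the letter c and x = ψ^ω(c), i.e. every
ψ^m(c) is a prefix of x. -/
def Generates (ψ : AB → List AB) (c : AB) (x : ℕ → AB) : Prop :=
  (∃ w : List AB, w ≠ [] ∧ ψ c = c :: w) ∧ ∀ m, PrefInf (mpow ψ m c) x

/-- Fibonacci numbers, shifted: `fibw k = F_{k-1}`, so fibw 0 = F₋₁ = 1,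
fibw 1 = F₀ = 1, Fₙ = Fₙ₋₁ + Fₙ₋₂. -/
def fibw : ℕ → ℕ
  | 0 => 1
  | 1 => 1
  | n + 2 => fibw (n + 1) + fibw n

/-- `HasCF γ a` : γ has continued fraction expansion [0; a 1, a 2, a 3, …]. -/
def HasCF (γ : ℝ) (a : ℕ → ℕ) : Prop :=
  ∃ x : ℕ → ℝ, x 0 = γ ∧ (∀ i, 0 < x i ∧ x i < 1) ∧
    ∀ i, 1 / x i = (a (i + 1) : ℝ) + x (i + 1)

/-- γ has a continued fraction expansion of type (i):
γ = [0;1+d₁,\overline{d₂,…,dₙ}] < 1/2 with dₙ ≥ d₁ ≥ 1. -/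
def CFTypeI (γ : ℝ) : Prop :=
  ∃ a : ℕ → ℕ, HasCF γ a ∧ γ < 1 / 2 ∧
    ∃ n : ℕ, 2 ≤ n ∧ ∃ d : ℕ → ℕ,
      (∀ i, 1 ≤ i → 1 ≤ d i) ∧ a 1 = 1 + d 1 ∧ (∀ i, 2 ≤ i → a i = d i) ∧
      (∀ i, 2 ≤ i → d (i + (n - 1)) = d i) ∧ d 1 ≤ d n

/-- γ has a continued fraction expansion of type (ii):
γ = [0;1,d₁,\overline{d₂,…,dₙ}] > 1/2 with dₙ ≥ d₁. -/
def CFTypeII (γ : ℝ) : Prop :=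
  ∃ a : ℕ → ℕ, HasCF γ a ∧ 1 / 2 < γ ∧
    ∃ n : ℕ, 2 ≤ n ∧ ∃ d : ℕ → ℕ,
      (∀ i, 1 ≤ i → 1 ≤ d i) ∧ a 1 = 1 ∧ (∀ i, 2 ≤ i → a i = d (i - 1)) ∧
      (∀ i, 2 ≤ i → d (i + (n - 1)) = d i) ∧ d 1 ≤ d n

/-- A Sturm number: an irrational γ ∈ (0,1) whose continued fraction expansion is of
type (i) or type (ii). -/
def IsSturmNumber (γ : ℝ) : Prop :=
  Irrational γ ∧ 0 < γ ∧ γ < 1 ∧ (CFTypeI γ ∨ CFTypeII γ)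

lemma applyM_cons (g : AB → List AB) (c : AB) (w : List AB) :
    applyM g (c :: w) = g c ++ applyM g w := rfl

lemma applyM_append (g : AB → List AB) (u v : List AB) :
    applyM g (u ++ v) = applyM g u ++ applyM g v := List.flatMap_append ..

lemma applyM_singleton (g : AB → List AB) (c : AB) : applyM g [c] = g c := by
  simp [applyM]

lemma lpow_add (w : List AB) (j k : ℕ) : lpow w (j + k) = lpow w j ++ lpow w k := by
  induction j with
  | zero => simp [lpow]
  | succ j ih => rw [Nat.succ_add]; simp [lpow, ih]

lemma applyM_lpow (g : AB → List AB) (w : List AB) (k : ℕ) :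
    applyM g (lpow w k) = lpow (applyM g w) k := by
  induction k with
  | zero => simp [lpow, applyM]
  | succ k ih => simp [lpow, applyM_append, ih]

lemma applyM_comp (g h : AB → List AB) (w : List AB) :
    applyM (compM g h) w = applyM g (applyM h w) := by
  induction w with
  | nil => simp [applyM]
  | cons c w ih => rw [applyM_cons, applyM_cons, ih, applyM_append]; rfl

lemma applyM_Em_Em (w : List AB) : applyM Em (applyM Em w) = w := by
  induction w with
  | nil => rfl
  | cons c w ih => cases c <;> simp [applyM_cons, Em, ih]

lemma sseq_ne (d : ℕ → ℕ) : ∀ k, sseq d k ≠ []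
  | 0 => by simp [sseq]
  | 1 => by simp [sseq]
  | (k + 2) => by
      simp only [sseq, ne_eq, List.append_eq_nil_iff]
      exact fun h => sseq_ne d k h.2

lemma sigma_sseq (d : ℕ → ℕ) (m : ℕ)
    (hper : ∀ i, 2 ≤ i → d (i + (m + 1)) = d i)
    (hdn : d 1 ≤ d (m + 2)) :
    ∀ k, applyM (sigmaGen d (m + 2)) (sseq d (k + 1)) = sseq d (m + 2 + k)
  | 0 => by
      show applyM _ [AB.a] = _
      rw [applyM_singleton]
      rfl
  | 1 => by
      show applyM _ (lpow [AB.a] (d 1) ++ [AB.b]) = sseq d (m + 3)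
      rw [applyM_append, applyM_lpow, applyM_singleton, applyM_singleton]
      have ha : sigmaGen d (m + 2) AB.a = sseq d (m + 2) := rfl
      have hb : sigmaGen d (m + 2) AB.b
          = lpow (sseq d (m + 2)) (d (m + 2) - d 1) ++ sseq d (m + 1) := rfl
      rw [ha, hb, ← List.append_assoc, ← lpow_add]
      have : d 1 + (d (m + 2) - d 1) = d (m + 2) := by omega
      rw [this]
      rfl
  | (k + 2) => by
      show applyM _ (lpow (sseq d (k + 1 + 1)) (d (k + 2)) ++ sseq d (k + 1)) = _
      rw [applyM_append, applyM_lpow, sigma_sseq d m hper hdn (k + 1),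
        sigma_sseq d m hper hdn k,
        show d (k + 2) = d (m + 2 + k + 1) by
          rw [show m + 2 + k + 1 = k + 2 + (m + 1) from by omega]
          exact (hper (k + 2) (by omega)).symm]
      rfl

lemma Em_sseq (d : ℕ → ℕ) : ∀ k, sseq (dhat d) (k + 1) = applyM Em (sseq d k)
  | 0 => rfl
  | 1 => by
      show lpow (sseq (dhat d) 1) (dhat d 1) ++ sseq (dhat d) 0 = _
      have : dhat d 1 = 0 := rfl
      rw [this]
      rfl
  | (k + 2) => by
      show lpow (sseq (dhat d) (k + 2)) (dhat d (k + 2)) ++ sseq (dhat d) (k + 1)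
          = applyM Em (lpow (sseq d (k + 1)) (d (k + 1)) ++ sseq d k)
      have hh : dhat d (k + 2) = d (k + 1) := by simp [dhat]
      rw [applyM_append, applyM_lpow, ← Em_sseq d (k + 1), ← Em_sseq d k, hh]

lemma sseq_dhat_head (d : ℕ → ℕ) (hd : ∀ i, 1 ≤ i → 1 ≤ d i) :
    ∀ k, ∃ t : List AB, sseq (dhat d) (k + 2) = AB.b :: t := by
  intro k
  induction k with
  | zero =>
      refine ⟨[], ?_⟩
      show lpow (sseq (dhat d) 1) (dhat d 1) ++ sseq (dhat d) 0 = _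
      rfl
  | succ k ih =>
      obtain ⟨t, ht⟩ := ih
      have hh : dhat d (k + 2) = d (k + 1) := by simp [dhat]
      obtain ⟨e, he⟩ : ∃ e, d (k + 1) = e + 1 := ⟨d (k + 1) - 1, by have := hd (k + 1) (by omega); omega⟩
      refine ⟨t ++ (lpow (sseq (dhat d) (k + 2)) e ++ sseq (dhat d) (k + 1)), ?_⟩
      show lpow (sseq (dhat d) (k + 2)) (dhat d (k + 2)) ++ sseq (dhat d) (k + 1) = _
      rw [hh, he]
      show (sseq (dhat d) (k + 2) ++ lpow (sseq (dhat d) (k + 2)) e) ++ sseq (dhat d) (k + 1) = _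
      rw [ht]
      simp

lemma sseq_dhat_head3 (d : ℕ → ℕ) (hd : ∀ i, 1 ≤ i → 1 ≤ d i) (k : ℕ) :
    ∃ t : List AB, t ≠ [] ∧ sseq (dhat d) (k + 3) = AB.b :: t := by
  obtain ⟨t, ht⟩ := sseq_dhat_head d hd k
  have hh : dhat d (k + 2) = d (k + 1) := by simp [dhat]
  obtain ⟨e, he⟩ : ∃ e, d (k + 1) = e + 1 := ⟨d (k + 1) - 1, by have := hd (k + 1) (by omega); omega⟩
  refine ⟨t ++ (lpow (sseq (dhat d) (k + 2)) e ++ sseq (dhat d) (k + 1)), ?_, ?_⟩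
  · intro hcon
    have : sseq (dhat d) (k + 1) = [] := by
      rcases List.append_eq_nil_iff.mp hcon with ⟨_, h2⟩
      exact (List.append_eq_nil_iff.mp h2).2
    exact sseq_ne _ _ this
  · show lpow (sseq (dhat d) (k + 2)) (dhat d (k + 2)) ++ sseq (dhat d) (k + 1) = _
    rw [hh, he]
    show (sseq (dhat d) (k + 2) ++ lpow (sseq (dhat d) (k + 2)) e) ++ sseq (dhat d) (k + 1) = _
    rw [ht]
    simp

lemma mpow_sigma (d : ℕ → ℕ) (m : ℕ)
    (hper : ∀ i, 2 ≤ i → d (i + (m + 1)) = d i)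
    (hdn : d 1 ≤ d (m + 2)) :
    ∀ j, mpow (sigmaGen d (m + 2)) j AB.a = sseq d (j * (m + 1) + 1) := by
  intro j
  induction j with
  | zero =>
      rw [show 0 * (m + 1) + 1 = 1 from by omega]
      rfl
  | succ j ih =>
      show applyM (sigmaGen d (m + 2)) (mpow (sigmaGen d (m + 2)) j AB.a) = _
      rw [ih, sigma_sseq d m hper hdn, show (j + 1) * (m + 1) + 1 = m + 2 + j * (m + 1) from by ring]

lemma mpow_hat (sg : AB → List AB) :
    ∀ j, mpow (compM Em (compM sg Em)) j AB.b = applyM Em (mpow sg j AB.a) := by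
  intro j
  induction j with
  | zero => rfl
  | succ j ih =>
      show applyM (compM Em (compM sg Em)) (mpow (compM Em (compM sg Em)) j AB.b) = _
      rw [ih, applyM_comp, applyM_comp, applyM_Em_Em]
      show applyM Em (applyM sg (mpow sg j AB.a)) = applyM Em (applyM sg (mpow sg j AB.a))
      rfl


/-- For a type (i) Sturm number α = [0;1+d₁,\overline{d₂,…,dₙ}]
(dₙ ≥ d₁ ≥ 1), c_{1−α} = (EσE)^ω(b): the morphism σ̂ = EσE is prolongable on b and
every σ̂^m(b) is a prefix of c_{1−α}, where c_{1−α} is the characteristic Sturmian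
word of slope 1 − α = [0;1,d₁,\overline{d₂,…,dₙ}] (standard sequence `sseq (dhat d)`). -/
theorem statement8 (n : ℕ) (hn : 2 ≤ n) (d : ℕ → ℕ)
    (hd : ∀ i, 1 ≤ i → 1 ≤ d i)
    (hper : ∀ i, 2 ≤ i → d (i + (n - 1)) = d i)
    (hdn : d 1 ≤ d n)
    (ch : ℕ → AB) (hch : ∀ k, PrefInf (sseq (dhat d) (k + 1)) ch) :
    Generates (compM Em (compM (sigmaGen d n) Em)) AB.b ch := by
  obtain ⟨m, rfl⟩ : ∃ m, n = m + 2 := ⟨n - 2, by omega⟩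
  have hper' : ∀ i, 2 ≤ i → d (i + (m + 1)) = d i := by
    intro i hi
    have h := hper i hi
    rwa [show i + (m + 2 - 1) = i + (m + 1) from by omega] at h
  have hdn' : d 1 ≤ d (m + 2) := hdn
  constructor
  · obtain ⟨t, htne, ht⟩ := sseq_dhat_head3 d hd m
    refine ⟨t, htne, ?_⟩
    have h1 : compM Em (compM (sigmaGen d (m + 2)) Em) AB.b
        = applyM Em (sseq d (m + 2)) := by
      show applyM Em (applyM (sigmaGen d (m + 2)) (Em AB.b)) = _
      rw [show Em AB.b = [AB.a] from rfl, applyM_singleton]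
      rfl
    rw [h1, ← Em_sseq d (m + 2)]
    exact ht
  · intro j
    rw [mpow_hat, mpow_sigma d m hper' hdn', ← Em_sseq d (j * (m + 1) + 1)]
    exact hch (j * (m + 1) + 1)
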